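/- Let M be a quantum channel on d×d complex matrices with Kraus operators (K_i) and steady state ρ. Let P_𝒜, P_{ℬ₁}, P_{ℬ₂}, P_𝒞 be orthogonal projectors onto four pairwise orthogonal subspaces whose sum is the identity (pairwise products vanish and P_𝒜 + P_{ℬ₁} + P_{ℬ₂} + P_𝒞 = 1). Assume every Kraus operator satisfies (P_{ℬ₂} + P_𝒞) K_i P_𝒜 = 0 and (P_𝒜 + P_{ℬ₁}) K_i P_𝒞 = 0. Assume tr(P_𝒜 ρ) > 0 and set ρ_𝒜 = P_𝒜 ρ P_𝒜 / tr(P_𝒜 ρ) and P_ℬ = P_{ℬ₁} + P_{ℬ₂}. Then ‖M(ρ_𝒜) − ρ_𝒜‖₁ ≤ 10 ‖P_ℬ ρ‖₁ / tr(P_𝒜 ρ). -/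

import Mathlib

open Matrix
open scoped ComplexOrder

/-- The trace norm (Schatten 1-norm) of a complex square matrix: `‖A‖₁ = tr √(AᴴA)`. -/
noncomputable def traceNorm {m : Type*} [Fintype m] [DecidableEq m] (A : Matrix m m ℂ) : ℝ :=
  (((Matrix.posSemidef_conjTranspose_mul_self A).1.eigenvectorUnitary : Matrix m m ℂ) *
    diagonal (((↑) : ℝ → ℂ) ∘ Real.sqrt ∘ (Matrix.posSemidef_conjTranspose_mul_self A).1.eigenvalues) *
    (star (Matrix.posSemidef_conjTranspose_mul_self A).1.eigenvectorUnitary : Matrix m m ℂ)).trace.re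

namespace QBT

variable {n : Type*} [Fintype n] [DecidableEq n]

/-- A two-sided contraction. -/
def IsCon (B : Matrix n n ℂ) : Prop :=
  (1 - Bᴴ * B).PosSemidef ∧ (1 - B * Bᴴ).PosSemidef

lemma posSemidef_of_proj {P : Matrix n n ℂ} (h1 : Pᴴ = P) (h2 : P * P = P) : P.PosSemidef := by
  have h : P = Pᴴ * P := by rw [h1, h2]
  rw [h]; exact posSemidef_conjTranspose_mul_self P

lemma one_sub_psd_of_proj {P : Matrix n n ℂ} (h1 : Pᴴ = P) (h2 : P * P = P) :
    (1 - P).PosSemidef := by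
  refine posSemidef_of_proj (by simp [h1]) ?_
  rw [mul_sub, sub_mul, sub_mul, mul_one, one_mul, h2, mul_one]
  abel

lemma isCon_of_proj {P : Matrix n n ℂ} (h1 : Pᴴ = P) (h2 : P * P = P) : IsCon P := by
  have hP : Pᴴ * P = P := by rw [h1, h2]
  have hP' : P * Pᴴ = P := by rw [h1, h2]
  refine ⟨?_, ?_⟩
  · rw [hP]; exact one_sub_psd_of_proj h1 h2
  · rw [hP']; exact one_sub_psd_of_proj h1 h2

lemma IsCon.mul {X Y : Matrix n n ℂ} (hX : IsCon X) (hY : IsCon Y) : IsCon (X * Y) := by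
  constructor
  · have key : 1 - (X*Y)ᴴ * (X*Y) = Yᴴ * (1 - Xᴴ*X) * Y + (1 - Yᴴ*Y) := by
      simp only [conjTranspose_mul]; noncomm_ring
    rw [key]; exact (hX.1.conjTranspose_mul_mul_same Y).add hY.1
  · have key : 1 - (X*Y) * (X*Y)ᴴ = X * (1 - Y*Yᴴ) * Xᴴ + (1 - X*Xᴴ) := by
      simp only [conjTranspose_mul]; noncomm_ring
    rw [key]; exact (hY.2.mul_mul_conjTranspose_same X).add hX.2

lemma IsCon.conjTranspose {B : Matrix n n ℂ} (h : IsCon B) : IsCon Bᴴ := by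
  refine ⟨?_, ?_⟩ <;> simp only [conjTranspose_conjTranspose]
  exacts [h.2, h.1]

lemma IsCon.neg {B : Matrix n n ℂ} (h : IsCon B) : IsCon (-B) := by
  refine ⟨?_, ?_⟩ <;> simp only [conjTranspose_neg, neg_mul, mul_neg, neg_neg]
  exacts [h.1, h.2]

lemma posSemidef_sum {ι : Type*} (s : Finset ι) (f : ι → Matrix n n ℂ)
    (h : ∀ i ∈ s, (f i).PosSemidef) : (∑ i ∈ s, f i).PosSemidef := by
  induction s using Finset.cons_induction with
  | empty => simpa using Matrix.PosSemidef.zero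
  | cons a s ha ih =>
      rw [Finset.sum_cons]
      exact (h a (by simp)).add (ih fun i hi => h i (by simp [hi]))

lemma isCon_channel_aux {m : ℕ} {K : Fin m → Matrix n n ℂ} (hK : ∑ i, (K i)ᴴ * K i = 1)
    {C : Matrix n n ℂ} (hC : (1 - Cᴴ * C).PosSemidef) :
    (1 - (∑ i, (K i)ᴴ * C * K i)ᴴ * (∑ i, (K i)ᴴ * C * K i)).PosSemidef := by
  set T : Matrix n n ℂ := ∑ i, (K i)ᴴ * C * K i with hT
  have hTH : Tᴴ = ∑ i, (K i)ᴴ * Cᴴ * K i := by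
    rw [hT, conjTranspose_sum]
    exact Finset.sum_congr rfl fun i _ => by
      simp [conjTranspose_mul, Matrix.mul_assoc]
  have h1 : ∑ i, (K i)ᴴ * (1 - Cᴴ*C) * K i = 1 - ∑ i, (K i)ᴴ*Cᴴ*C*(K i) := by
    calc ∑ i, (K i)ᴴ * (1 - Cᴴ*C) * K i
        = ∑ i, ((K i)ᴴ * K i - (K i)ᴴ*Cᴴ*C*(K i)) :=
          Finset.sum_congr rfl fun i _ => by noncomm_ring
      _ = 1 - ∑ i, (K i)ᴴ*Cᴴ*C*(K i) := by rw [Finset.sum_sub_distrib, hK]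
  have h2 : ∑ i, (C * K i - K i * T)ᴴ * (C * K i - K i * T)
      = ∑ i, (K i)ᴴ*Cᴴ*C*(K i) - Tᴴ * T := by
    have e : ∀ i : Fin m, (C * K i - K i * T)ᴴ * (C * K i - K i * T)
        = (K i)ᴴ*Cᴴ*C*(K i) - ((K i)ᴴ * Cᴴ * K i) * T - Tᴴ * ((K i)ᴴ * C * K i)
          + Tᴴ * ((K i)ᴴ * K i) * T := by
      intro i; simp only [conjTranspose_sub, conjTranspose_mul, conjTranspose_conjTranspose]
      noncomm_ring
    calc ∑ i, (C * K i - K i * T)ᴴ * (C * K i - K i * T)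
        = ∑ i, ((K i)ᴴ*Cᴴ*C*(K i) - ((K i)ᴴ * Cᴴ * K i) * T - Tᴴ * ((K i)ᴴ * C * K i)
          + Tᴴ * ((K i)ᴴ * K i) * T) := Finset.sum_congr rfl fun i _ => e i
      _ = ∑ i, (K i)ᴴ*Cᴴ*C*(K i) - (∑ i, (K i)ᴴ * Cᴴ * K i) * T - Tᴴ * T
          + Tᴴ * (∑ i, (K i)ᴴ * K i) * T := by
          simp only [Finset.sum_add_distrib, Finset.sum_sub_distrib, ← Finset.sum_mul,
            ← Finset.mul_sum, ← hT]
      _ = ∑ i, (K i)ᴴ*Cᴴ*C*(K i) - Tᴴ * T := by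
          rw [← hTH, hK, Matrix.mul_one]; abel
  have key : 1 - Tᴴ * T = (∑ i, (K i)ᴴ * (1 - Cᴴ*C) * K i)
      + ∑ i, (C * K i - K i * T)ᴴ * (C * K i - K i * T) := by
    rw [h1, h2]; abel
  rw [key]
  exact (posSemidef_sum _ _ fun i _ => hC.conjTranspose_mul_mul_same (K i)).add
    (posSemidef_sum _ _ fun i _ => posSemidef_conjTranspose_mul_self _)

lemma isCon_channel {m : ℕ} {K : Fin m → Matrix n n ℂ} (hK : ∑ i, (K i)ᴴ * K i = 1)
    {C : Matrix n n ℂ} (hC : IsCon C) : IsCon (∑ i, (K i)ᴴ * C * K i) := by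
  constructor
  · exact isCon_channel_aux hK hC.1
  · have hTH : (∑ i, (K i)ᴴ * C * K i)ᴴ = ∑ i, (K i)ᴴ * Cᴴ * K i := by
      rw [conjTranspose_sum]
      exact Finset.sum_congr rfl fun i _ => by simp [conjTranspose_mul, Matrix.mul_assoc]
    have hCH : (1 - (Cᴴ)ᴴ * Cᴴ).PosSemidef := by
      rw [conjTranspose_conjTranspose]; exact hC.2
    have := isCon_channel_aux hK hCH
    rw [← hTH] at this
    rw [show (∑ i, (K i)ᴴ * C * K i) * (∑ i, (K i)ᴴ * C * K i)ᴴ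
        = ((∑ i, (K i)ᴴ * C * K i)ᴴ)ᴴ * (∑ i, (K i)ᴴ * C * K i)ᴴ by
      rw [conjTranspose_conjTranspose]]
    exact this


section spec

variable (A : Matrix n n ℂ)

/-- functional calculus of `AᴴA` -/
noncomputable def sf (g : ℝ → ℝ) : Matrix n n ℂ :=
  ((Matrix.posSemidef_conjTranspose_mul_self A).1.eigenvectorUnitary : Matrix n n ℂ) *
    diagonal ((↑) ∘ g ∘ (Matrix.posSemidef_conjTranspose_mul_self A).1.eigenvalues) *
    (star ((Matrix.posSemidef_conjTranspose_mul_self A).1.eigenvectorUnitary) : Matrix n n ℂ)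

lemma sqrt_eq_sf : (((Matrix.posSemidef_conjTranspose_mul_self A).1.eigenvectorUnitary : Matrix n n ℂ) *
    diagonal (((↑) : ℝ → ℂ) ∘ Real.sqrt ∘ (Matrix.posSemidef_conjTranspose_mul_self A).1.eigenvalues) *
    (star (Matrix.posSemidef_conjTranspose_mul_self A).1.eigenvectorUnitary : Matrix n n ℂ))
    = sf A Real.sqrt := rfl

lemma sf_id : sf A id = Aᴴ * A :=
  ((Matrix.posSemidef_conjTranspose_mul_self A).1.spectral_theorem).symm

lemma sf_one : sf A (fun _ => 1) = 1 := by
  unfold sf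
  have h : ((↑) ∘ (fun (_ : ℝ) => (1:ℝ)) ∘
      (Matrix.posSemidef_conjTranspose_mul_self A).1.eigenvalues) = fun (_ : n) => (1 : ℂ) := by
    funext i; simp [Function.comp_apply]
  rw [h, diagonal_one, Matrix.mul_one]
  exact Unitary.mul_star_self_of_mem (SetLike.coe_mem _)

lemma sf_mul (g h : ℝ → ℝ) : sf A g * sf A h = sf A (fun x => g x * h x) := by
  unfold sf
  set V := ((Matrix.posSemidef_conjTranspose_mul_self A).1.eigenvectorUnitary : Matrix n n ℂ)
    with hVdef
  set ev := (Matrix.posSemidef_conjTranspose_mul_self A).1.eigenvalues with hevdef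
  have hV : star V * V = 1 := Unitary.star_mul_self_of_mem (SetLike.coe_mem _)
  have hdd : diagonal ((↑) ∘ g ∘ ev) * diagonal ((↑) ∘ h ∘ ev)
      = diagonal (((↑) ∘ (fun x => g x * h x) ∘ ev) : n → ℂ) := by
    rw [diagonal_mul_diagonal]
    exact congrArg diagonal (funext fun i => (Complex.ofReal_mul _ _).symm)
  calc V * diagonal ((↑) ∘ g ∘ ev) * star V * (V * diagonal ((↑) ∘ h ∘ ev) * star V)
      = V * (diagonal ((↑) ∘ g ∘ ev) * ((star V * V) * diagonal ((↑) ∘ h ∘ ev))) * star V := by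
        simp only [Matrix.mul_assoc]
    _ = V * (diagonal ((↑) ∘ g ∘ ev) * diagonal ((↑) ∘ h ∘ ev)) * star V := by
        rw [hV, Matrix.one_mul]
    _ = V * diagonal (((↑) ∘ (fun x => g x * h x) ∘ ev) : n → ℂ) * star V := by rw [hdd]

lemma sf_conjTranspose (g : ℝ → ℝ) : (sf A g)ᴴ = sf A g := by
  unfold sf
  set V := ((Matrix.posSemidef_conjTranspose_mul_self A).1.eigenvectorUnitary : Matrix n n ℂ)
  set ev := (Matrix.posSemidef_conjTranspose_mul_self A).1.eigenvalues
  have hD : (diagonal (((↑) ∘ g ∘ ev) : n → ℂ))ᴴ = diagonal ((↑) ∘ g ∘ ev) := by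
    rw [diagonal_conjTranspose]
    refine congrArg diagonal (funext fun i => ?_)
    simp only [Pi.star_apply, Function.comp_apply, Complex.star_def, Complex.conj_ofReal]
  simp only [Matrix.star_eq_conjTranspose]
  simp [conjTranspose_mul, hD, Matrix.mul_assoc]

lemma sf_congr {g h : ℝ → ℝ} (hgh : ∀ x, 0 ≤ x → g x = h x) : sf A g = sf A h := by
  unfold sf
  have h : (((↑) ∘ g ∘ (Matrix.posSemidef_conjTranspose_mul_self A).1.eigenvalues) : n → ℂ)
      = ((↑) ∘ h ∘ (Matrix.posSemidef_conjTranspose_mul_self A).1.eigenvalues) := by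
    funext i
    simp only [Function.comp_apply]
    rw [hgh _ ((Matrix.posSemidef_conjTranspose_mul_self A).eigenvalues_nonneg i)]
  rw [h]

lemma sf_trace (g : ℝ → ℝ) :
    (sf A g).trace = ∑ i, (g ((Matrix.posSemidef_conjTranspose_mul_self A).1.eigenvalues i) : ℂ) := by
  unfold sf
  rw [Matrix.trace_mul_cycle, Unitary.star_mul_self_of_mem (SetLike.coe_mem _), Matrix.one_mul,
    trace_diagonal]
  exact Finset.sum_congr rfl fun i _ => rfl

lemma traceNorm_eq_sum :
    traceNorm A = ∑ i, Real.sqrt ((Matrix.posSemidef_conjTranspose_mul_self A).1.eigenvalues i) := by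
  rw [traceNorm, sqrt_eq_sf, sf_trace, Complex.re_sum]
  exact Finset.sum_congr rfl fun i _ => Complex.ofReal_re _

lemma traceNorm_nonneg : 0 ≤ traceNorm A := by
  rw [traceNorm_eq_sum]
  exact Finset.sum_nonneg fun i _ => Real.sqrt_nonneg _
end spec

lemma con_mul {X Y : Matrix n n ℂ} (hX : (1 - Xᴴ*X).PosSemidef) (hY : (1 - Yᴴ*Y).PosSemidef) :
    (1 - (X*Y)ᴴ * (X*Y)).PosSemidef := by
  have key : 1 - (X*Y)ᴴ * (X*Y) = Yᴴ * (1 - Xᴴ*X) * Y + (1 - Yᴴ*Y) := by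
    simp only [conjTranspose_mul]; noncomm_ring
  rw [key]; exact (hX.conjTranspose_mul_mul_same Y).add hY

/-- `x ↦ x^{-1/2}` on the support -/
noncomputable def pf : ℝ → ℝ := fun x => if 0 < x then (Real.sqrt x)⁻¹ else 0

/-- support indicator -/
noncomputable def ef : ℝ → ℝ := fun x => if 0 < x then 1 else 0

lemma sf_proj (A : Matrix n n ℂ) {g : ℝ → ℝ} (hg : ∀ x, 0 ≤ x → g x * g x = g x) :
    sf A g * sf A g = sf A g := by
  rw [sf_mul]; exact sf_congr A hg

section WA
variable (A : Matrix n n ℂ)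

lemma hWW : (A * sf A pf)ᴴ * (A * sf A pf) = sf A ef := by
  rw [conjTranspose_mul, sf_conjTranspose]
  calc sf A pf * Aᴴ * (A * sf A pf) = sf A pf * (Aᴴ * A) * sf A pf := by
        simp only [Matrix.mul_assoc]
    _ = sf A pf * sf A id * sf A pf := by rw [sf_id]
    _ = sf A (fun x => pf x * id x * pf x) := by rw [sf_mul, sf_mul]
    _ = sf A ef := by
        refine sf_congr A fun x hx => ?_
        by_cases h : 0 < x
        · simp only [pf, ef, if_pos h, id]
          have hs := Real.mul_self_sqrt hx
          have hnz : Real.sqrt x ≠ 0 := by positivity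
          field_simp
          try linarith [hs]
        · simp [pf, ef, if_neg h]

lemma hWWH : (A * sf A pf) * (A * sf A pf)ᴴ = A * sf A (fun x => pf x * pf x) * Aᴴ := by
  rw [conjTranspose_mul, sf_conjTranspose]
  calc A * sf A pf * (sf A pf * Aᴴ) = A * (sf A pf * sf A pf) * Aᴴ := by
        simp only [Matrix.mul_assoc]
    _ = A * sf A (fun x => pf x * pf x) * Aᴴ := by rw [sf_mul]

lemma hWWH_proj : (A * sf A (fun x => pf x * pf x) * Aᴴ) * (A * sf A (fun x => pf x * pf x) * Aᴴ)
    = A * sf A (fun x => pf x * pf x) * Aᴴ := by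
  calc (A * sf A (fun x => pf x * pf x) * Aᴴ) * (A * sf A (fun x => pf x * pf x) * Aᴴ)
      = A * (sf A (fun x => pf x * pf x) * (Aᴴ * A) * sf A (fun x => pf x * pf x)) * Aᴴ := by
        simp only [Matrix.mul_assoc]
    _ = A * (sf A (fun x => pf x * pf x) * sf A id * sf A (fun x => pf x * pf x)) * Aᴴ := by
        rw [sf_id]
    _ = A * sf A (fun x => pf x * pf x * id x * (pf x * pf x)) * Aᴴ := by
        rw [sf_mul, sf_mul]
    _ = A * sf A (fun x => pf x * pf x) * Aᴴ := by
        have : sf A (fun x => pf x * pf x * id x * (pf x * pf x)) = sf A (fun x => pf x * pf x) := by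
          refine sf_congr A fun x hx => ?_
          by_cases h : 0 < x
          · simp only [pf, if_pos h, id]
            have hs := Real.mul_self_sqrt hx
            have hnz : Real.sqrt x ≠ 0 := by positivity
            field_simp
            try nlinarith [hs]
          · simp [pf, if_neg h]
        rw [this]

lemma isCon_W : IsCon (A * sf A pf) := by
  constructor
  · rw [hWW]
    exact one_sub_psd_of_proj (sf_conjTranspose _ _)
      (sf_proj _ fun x hx => by by_cases h : 0 < x <;> simp [ef, h])
  · rw [hWWH]
    refine one_sub_psd_of_proj ?_ (hWWH_proj A)
    rw [conjTranspose_mul, conjTranspose_mul, sf_conjTranspose, conjTranspose_conjTranspose,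
      Matrix.mul_assoc]

lemma A_eq_W_sqrt : A = (A * sf A pf) * sf A Real.sqrt := by
  have h1 : (A * sf A pf) * sf A Real.sqrt = A * sf A ef := by
    rw [Matrix.mul_assoc, sf_mul]
    congr 1
    refine sf_congr A fun x hx => ?_
    by_cases h : 0 < x
    · simp only [pf, ef, if_pos h]
      exact inv_mul_cancel₀ (by positivity)
    · simp [pf, ef, if_neg h]
  rw [h1]
  have hNH : sf A ef * sf A id = sf A id := by
    rw [sf_mul]
    refine sf_congr A fun x hx => ?_
    by_cases h : 0 < x
    · simp [ef, if_pos h]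
    · have : x = 0 := le_antisymm (not_lt.mp h) hx
      simp [ef, this]
  have hHN : sf A id * sf A ef = sf A id := by
    rw [sf_mul]
    refine sf_congr A fun x hx => ?_
    by_cases h : 0 < x
    · simp [ef, if_pos h]
    · have : x = 0 := le_antisymm (not_lt.mp h) hx
      simp [ef, this]
  have hz : (A * sf A ef - A)ᴴ * (A * sf A ef - A) = 0 := by
    have expand : (A * sf A ef - A)ᴴ * (A * sf A ef - A)
        = sf A ef * (Aᴴ*A) * sf A ef - sf A ef * (Aᴴ*A) - (Aᴴ*A) * sf A ef + Aᴴ*A := by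
      rw [conjTranspose_sub, conjTranspose_mul, sf_conjTranspose]
      noncomm_ring
    rw [expand, ← sf_id]
    simp only [hNH, hHN]
    abel
  have := conjTranspose_mul_self_eq_zero.mp hz
  have h2 : A * sf A ef = A := by
    have := sub_eq_zero.mp this
    exact this
  exact h2.symm
end WA

lemma re_diag_le_one {G : Matrix n n ℂ} (h : (1 - Gᴴ*G).PosSemidef) (i : n) : (G i i).re ≤ 1 := by
  have h0 := h.dotProduct_mulVec_nonneg (Pi.single i 1)
  have hstar : star (Pi.single i (1:ℂ) : n → ℂ) = (Pi.single i 1 : n → ℂ) := by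
    rw [← Pi.single_star, star_one]
  have hcalc : star (Pi.single i (1:ℂ) : n → ℂ) ⬝ᵥ ((1 - Gᴴ*G) *ᵥ (Pi.single i 1 : n → ℂ))
      = 1 - (Gᴴ*G) i i := by
    rw [hstar, Matrix.sub_mulVec, Matrix.one_mulVec, dotProduct_sub, Matrix.mulVec_single,
      single_dotProduct, single_dotProduct]
    simp
  rw [hcalc] at h0
  have h1 : ((Gᴴ*G) i i).re ≤ 1 := by
    have := Complex.le_def.mp h0
    have hre : (0:ℂ).re ≤ (1 - (Gᴴ*G) i i).re := this.1
    simpa [Complex.sub_re] using hre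
  have h2 : ((Gᴴ*G) i i).re = ∑ j, Complex.normSq (G j i) := by
    rw [Matrix.mul_apply, Complex.re_sum]
    refine Finset.sum_congr rfl fun j _ => ?_
    rw [conjTranspose_apply, Complex.star_def, mul_comm, Complex.mul_conj, Complex.ofReal_re]
  have h3 : Complex.normSq (G i i) ≤ 1 := by
    rw [h2] at h1
    refine le_trans ?_ h1
    exact Finset.single_le_sum (f := fun j => Complex.normSq (G j i))
      (fun j _ => Complex.normSq_nonneg _) (Finset.mem_univ i)
  have h4 : ‖G i i‖ ≤ 1 := by
    have := Complex.sq_norm (G i i)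
    nlinarith [norm_nonneg (G i i)]
  exact le_trans (Complex.re_le_norm _) h4

theorem re_trace_mul_le_traceNorm {B : Matrix n n ℂ} (A : Matrix n n ℂ)
    (hB : (1 - Bᴴ*B).PosSemidef) : ((B * A).trace).re ≤ traceNorm A := by
  set V := ((Matrix.posSemidef_conjTranspose_mul_self A).1.eigenvectorUnitary : Matrix n n ℂ)
    with hVdef
  set ev := (Matrix.posSemidef_conjTranspose_mul_self A).1.eigenvalues with hevdef
  set W := A * sf A pf with hWdef
  have hVsV : star V * V = 1 := Unitary.star_mul_self_of_mem (SetLike.coe_mem _)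
  have hVVs : V * star V = 1 := Unitary.mul_star_self_of_mem (SetLike.coe_mem _)
  set G := star V * (B * W) * V with hGdef
  have hGcon : (1 - Gᴴ*G).PosSemidef := by
    have hsV : (1 - (star V)ᴴ * (star V)).PosSemidef := by
      rw [Matrix.star_eq_conjTranspose, conjTranspose_conjTranspose,
        ← Matrix.star_eq_conjTranspose, hVVs, sub_self]
      exact Matrix.PosSemidef.zero
    have hV1 : (1 - Vᴴ * V).PosSemidef := by
      rw [← Matrix.star_eq_conjTranspose, hVsV, sub_self]
      exact Matrix.PosSemidef.zero
    have hW1 : (1 - Wᴴ*W).PosSemidef := (isCon_W A).1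
    exact con_mul (con_mul hsV (con_mul hB hW1)) hV1
  have hsf : sf A Real.sqrt = V * diagonal (Complex.ofReal ∘ Real.sqrt ∘ ev) * star V := rfl
  have htr : (B * A).trace = (G * diagonal (Complex.ofReal ∘ Real.sqrt ∘ ev)).trace := by
    have e1 : (B * A).trace = (B * (W * sf A Real.sqrt)).trace :=
      congrArg (fun X => (B * X).trace) (A_eq_W_sqrt A)
    rw [e1, hsf]
    rw [show B * (W * (V * diagonal (Complex.ofReal ∘ Real.sqrt ∘ ev) * star V))
        = B * W * V * diagonal (Complex.ofReal ∘ Real.sqrt ∘ ev) * star V by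
      simp only [Matrix.mul_assoc]]
    rw [Matrix.trace_mul_cycle]
    rw [show star V * (B * W * V) * diagonal (Complex.ofReal ∘ Real.sqrt ∘ ev)
        = G * diagonal (Complex.ofReal ∘ Real.sqrt ∘ ev) by
      rw [hGdef]; simp only [Matrix.mul_assoc]]
  have hdiag : (G * diagonal (Complex.ofReal ∘ Real.sqrt ∘ ev)).trace
      = ∑ i, G i i * (Real.sqrt (ev i) : ℂ) := by
    simp [Matrix.trace, Matrix.diag, Matrix.mul_diagonal, Function.comp_apply]
  rw [htr, hdiag, Complex.re_sum, traceNorm_eq_sum]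
  refine Finset.sum_le_sum fun i _ => ?_
  have hri : (G i i * (Real.sqrt (ev i) : ℂ)).re = Real.sqrt (ev i) * (G i i).re := by
    rw [mul_comm, Complex.re_ofReal_mul]
  rw [hri]
  calc Real.sqrt (ev i) * (G i i).re ≤ Real.sqrt (ev i) * 1 :=
        mul_le_mul_of_nonneg_left (re_diag_le_one hGcon i) (Real.sqrt_nonneg _)
    _ = Real.sqrt (ev i) := mul_one _

theorem exists_isCon_attain (A : Matrix n n ℂ) :
    ∃ B : Matrix n n ℂ, IsCon B ∧ ((B * A).trace).re = traceNorm A := by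
  refine ⟨(A * sf A pf)ᴴ, (isCon_W A).conjTranspose, ?_⟩
  have h1 : (A * sf A pf)ᴴ * A = sf A pf * (Aᴴ * A) := by
    rw [conjTranspose_mul, sf_conjTranspose, Matrix.mul_assoc]
  rw [h1, ← sf_id, sf_mul]
  have h2 : sf A (fun x => pf x * id x) = sf A Real.sqrt := by
    refine sf_congr A fun x hx => ?_
    by_cases h : 0 < x
    · simp only [pf, if_pos h, id]
      have hs := Real.mul_self_sqrt hx
      have hnz : Real.sqrt x ≠ 0 := by positivity
      field_simp
      try linarith [hs]
    · have : x = 0 := le_antisymm (not_lt.mp h) hx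
      simp [pf, this]
  rw [h2, sf_trace, traceNorm_eq_sum, Complex.re_sum]
  exact Finset.sum_congr rfl fun i _ => Complex.ofReal_re _

lemma key_identity {m : ℕ} (K : Fin m → Matrix n n ℂ)
    (ρ PA PC p s b : Matrix n n ℂ)
    (hsb : s + b = 1)
    (hsexp : s * ρ * s = PA*ρ*PA + PA*ρ*PC + PC*ρ*PA + PC*ρ*PC)
    (hpPA : p * PA = PA) (hPAp : PA * p = PA) (hpPC : p * PC = 0) (hPCp : PC * p = 0)
    (kPA : ∀ i, p * (K i * PA) = K i * PA)
    (kPC : ∀ i, p * (K i * PC) = 0)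
    (rPA : ∀ i, PA * (K i)ᴴ * p = PA * (K i)ᴴ)
    (rPC : ∀ i, PC * (K i)ᴴ * p = 0)
    (hsteady : ∑ i, K i * ρ * (K i)ᴴ = ρ) :
    (∑ i, K i * (PA*ρ*PA) * (K i)ᴴ) - PA*ρ*PA
      = (p*(b*ρ)*p + p*(s*ρ*b)*p)
        - (p*(∑ i, K i*(b*ρ)*(K i)ᴴ)*p + p*(∑ i, K i*(s*ρ*b)*(K i)ᴴ)*p) := by
  -- decomposition of ρ
  have h1 : ρ = (s+b)*ρ*(s+b) := by rw [hsb, Matrix.one_mul, Matrix.mul_one]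
  have h2 : b*ρ*(s+b) = b*ρ := by rw [hsb, Matrix.mul_one]
  have hdec : PA*ρ*PA = ρ - PC*ρ*PC - (PA*ρ*PC + PC*ρ*PA) - (b*ρ + s*ρ*b) := by
    calc PA*ρ*PA
        = s*ρ*s - PC*ρ*PC - (PA*ρ*PC + PC*ρ*PA) := by rw [hsexp]; abel
      _ = (s+b)*ρ*(s+b) - PC*ρ*PC - (PA*ρ*PC + PC*ρ*PA) - (b*ρ*(s+b) + s*ρ*b) := by
          noncomm_ring
      _ = ρ - PC*ρ*PC - (PA*ρ*PC + PC*ρ*PA) - (b*ρ + s*ρ*b) := by rw [← h1, h2]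
  -- compressions
  have cA : ∀ i, K i * (PA*ρ*PA) * (K i)ᴴ = p * (K i * (PA*ρ*PA) * (K i)ᴴ) * p := by
    intro i
    calc K i * (PA*ρ*PA) * (K i)ᴴ
        = (K i * PA) * (ρ * ((PA * (K i)ᴴ))) := by simp only [Matrix.mul_assoc]
      _ = (p * (K i * PA)) * (ρ * ((PA * (K i)ᴴ) * p)) := by rw [kPA i]; rw [show (PA * (K i)ᴴ) * p = PA * (K i)ᴴ from rPA i]
      _ = p * (K i * (PA*ρ*PA) * (K i)ᴴ) * p := by simp only [Matrix.mul_assoc]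
  have cσp : p * (PA*ρ*PA) * p = PA*ρ*PA := by
    calc p * (PA*ρ*PA) * p = (p * PA) * (ρ * (PA * p)) := by simp only [Matrix.mul_assoc]
      _ = PA*ρ*PA := by rw [hpPA, hPAp]; simp only [Matrix.mul_assoc]
  have cτp : p * (PC*ρ*PC) * p = 0 := by
    have : p * (PC*ρ*PC) * p = (p * PC) * (ρ * (PC * p)) := by simp only [Matrix.mul_assoc]
    rw [this, hpPC, Matrix.zero_mul]
  have cX1p : p * (PA*ρ*PC) * p = 0 := by
    have : p * (PA*ρ*PC) * p = (p * PA) * (ρ * (PC * p)) := by simp only [Matrix.mul_assoc]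
    rw [this, hPCp, Matrix.mul_zero, Matrix.mul_zero]
  have cX2p : p * (PC*ρ*PA) * p = 0 := by
    have : p * (PC*ρ*PA) * p = (p * PC) * (ρ * (PA * p)) := by simp only [Matrix.mul_assoc]
    rw [this, hpPC, Matrix.zero_mul]
  have cτ : ∀ i, p * (K i * (PC*ρ*PC) * (K i)ᴴ) * p = 0 := by
    intro i
    have : p * (K i * (PC*ρ*PC) * (K i)ᴴ) * p
        = (p * (K i * PC)) * (ρ * (PC * ((K i)ᴴ * p))) := by simp only [Matrix.mul_assoc]
    rw [this, kPC i, Matrix.zero_mul]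
  have cX1 : ∀ i, p * (K i * (PA*ρ*PC) * (K i)ᴴ) * p = 0 := by
    intro i
    have : p * (K i * (PA*ρ*PC) * (K i)ᴴ) * p
        = (p * (K i * PA)) * (ρ * ((PC * (K i)ᴴ) * p)) := by simp only [Matrix.mul_assoc]
    rw [this, rPC i, Matrix.mul_zero, Matrix.mul_zero]
  have cX2 : ∀ i, p * (K i * (PC*ρ*PA) * (K i)ᴴ) * p = 0 := by
    intro i
    have : p * (K i * (PC*ρ*PA) * (K i)ᴴ) * p
        = (p * (K i * PC)) * (ρ * (PA * ((K i)ᴴ * p))) := by simp only [Matrix.mul_assoc]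
    rw [this, kPC i, Matrix.zero_mul]
  -- per-term decomposition and summation
  have cdec : ∀ i : Fin m, K i * (PA*ρ*PA) * (K i)ᴴ
      = K i*ρ*(K i)ᴴ - K i*(PC*ρ*PC)*(K i)ᴴ
        - (K i*(PA*ρ*PC)*(K i)ᴴ + K i*(PC*ρ*PA)*(K i)ᴴ)
        - (K i*(b*ρ)*(K i)ᴴ + K i*(s*ρ*b)*(K i)ᴴ) := by
    intro i; rw [hdec]; noncomm_ring
  have hMsum : ∑ i, K i*(PA*ρ*PA)*(K i)ᴴ
      = ρ - (∑ i, K i*(PC*ρ*PC)*(K i)ᴴ)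
        - ((∑ i, K i*(PA*ρ*PC)*(K i)ᴴ) + (∑ i, K i*(PC*ρ*PA)*(K i)ᴴ))
        - ((∑ i, K i*(b*ρ)*(K i)ᴴ) + (∑ i, K i*(s*ρ*b)*(K i)ᴴ)) := by
    rw [Finset.sum_congr rfl fun i _ => cdec i]
    rw [Finset.sum_sub_distrib, Finset.sum_sub_distrib, Finset.sum_sub_distrib,
      Finset.sum_add_distrib, Finset.sum_add_distrib, hsteady]
  have hρσ : ρ - PA*ρ*PA = PC*ρ*PC + (PA*ρ*PC + PC*ρ*PA) + (b*ρ + s*ρ*b) := by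
    rw [hdec]; abel
  -- step 1
  have e1 : p * (∑ i, K i*(PA*ρ*PA)*(K i)ᴴ) * p = ∑ i, p * (K i*(PA*ρ*PA)*(K i)ᴴ) * p := by
    rw [Finset.mul_sum, Finset.sum_mul]
  have step1 : (∑ i, K i*(PA*ρ*PA)*(K i)ᴴ) - PA*ρ*PA
      = p * ((∑ i, K i*(PA*ρ*PA)*(K i)ᴴ) - PA*ρ*PA) * p := by
    have : p * ((∑ i, K i*(PA*ρ*PA)*(K i)ᴴ) - PA*ρ*PA) * p
        = p * (∑ i, K i*(PA*ρ*PA)*(K i)ᴴ) * p - p * (PA*ρ*PA) * p := by noncomm_ring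
    rw [this, e1, cσp, ← Finset.sum_congr rfl fun i _ => (cA i).symm]
  -- step 2
  rw [step1]
  have edist : p * ((∑ i, K i*(PA*ρ*PA)*(K i)ᴴ) - PA*ρ*PA) * p
      = p*(ρ - PA*ρ*PA)*p - p*(∑ i, K i*(PC*ρ*PC)*(K i)ᴴ)*p
        - (p*(∑ i, K i*(PA*ρ*PC)*(K i)ᴴ)*p + p*(∑ i, K i*(PC*ρ*PA)*(K i)ᴴ)*p)
        - (p*(∑ i, K i*(b*ρ)*(K i)ᴴ)*p + p*(∑ i, K i*(s*ρ*b)*(K i)ᴴ)*p) := by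
    rw [hMsum]; noncomm_ring
  rw [edist]
  have emid : p*(ρ - PA*ρ*PA)*p
      = p*(PC*ρ*PC)*p + (p*(PA*ρ*PC)*p + p*(PC*ρ*PA)*p) + (p*(b*ρ)*p + p*(s*ρ*b)*p) := by
    rw [hρσ]; noncomm_ring
  rw [emid, cτp, cX1p, cX2p]
  have z1 : p*(∑ i, K i*(PC*ρ*PC)*(K i)ᴴ)*p = 0 := by
    rw [Finset.mul_sum, Finset.sum_mul]
    exact Finset.sum_eq_zero fun i _ => cτ i
  have z2 : p*(∑ i, K i*(PA*ρ*PC)*(K i)ᴴ)*p = 0 := by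
    rw [Finset.mul_sum, Finset.sum_mul]
    exact Finset.sum_eq_zero fun i _ => cX1 i
  have z3 : p*(∑ i, K i*(PC*ρ*PA)*(K i)ᴴ)*p = 0 := by
    rw [Finset.mul_sum, Finset.sum_mul]
    exact Finset.sum_eq_zero fun i _ => cX2 i
  rw [z1, z2, z3]
  abel

end QBT

/-- **Quantum Bottleneck Theorem (general case).**  Let `M(X) = ∑ i, Kᵢ X Kᵢᴴ` be a quantum
channel with steady state `ρ`, and let `P_𝒜, P_ℬ₁, P_ℬ₂, P_𝒞` be orthogonal projectors onto
four pairwise orthogonal subspaces summing to the identity, such that every Kraus operator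
satisfies `(P_ℬ₂ + P_𝒞) Kᵢ P_𝒜 = 0` and `(P_𝒜 + P_ℬ₁) Kᵢ P_𝒞 = 0`.  If `tr(P_𝒜 ρ) > 0` and
`ρ_𝒜 = P_𝒜 ρ P_𝒜 / tr(P_𝒜 ρ)`, then `‖M(ρ_𝒜) − ρ_𝒜‖₁ ≤ 10 ‖(P_ℬ₁ + P_ℬ₂) ρ‖₁ / tr(P_𝒜 ρ)`. -/
theorem quantum_bottleneck_general {d m : ℕ}
    (K : Fin m → Matrix (Fin d) (Fin d) ℂ)
    (hK : ∑ i, (K i)ᴴ * K i = 1)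
    (ρ : Matrix (Fin d) (Fin d) ℂ)
    (hρ : ρ.PosSemidef) (hρtr : ρ.trace = 1)
    (hsteady : ∑ i, K i * ρ * (K i)ᴴ = ρ)
    (PA PB₁ PB₂ PC : Matrix (Fin d) (Fin d) ℂ)
    (hPA : PAᴴ = PA ∧ PA * PA = PA) (hPB₁ : PB₁ᴴ = PB₁ ∧ PB₁ * PB₁ = PB₁)
    (hPB₂ : PB₂ᴴ = PB₂ ∧ PB₂ * PB₂ = PB₂) (hPC : PCᴴ = PC ∧ PC * PC = PC)
    (horth : PA * PB₁ = 0 ∧ PA * PB₂ = 0 ∧ PA * PC = 0 ∧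
             PB₁ * PB₂ = 0 ∧ PB₁ * PC = 0 ∧ PB₂ * PC = 0)
    (hsum : PA + PB₁ + PB₂ + PC = 1)
    (hcond : ∀ i, (PB₂ + PC) * K i * PA = 0 ∧ (PA + PB₁) * K i * PC = 0)
    (htrA : 0 < (PA * ρ).trace.re) :
    traceNorm
        ((∑ i, K i * (((PA * ρ).trace.re)⁻¹ • (PA * ρ * PA)) * (K i)ᴴ) -
          ((PA * ρ).trace.re)⁻¹ • (PA * ρ * PA))
      ≤ 10 * traceNorm ((PB₁ + PB₂) * ρ) / (PA * ρ).trace.re := by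
  have hρh : ρᴴ = ρ := hρ.1
  -- reversed orthogonality facts
  have swap : ∀ X Y : Matrix (Fin d) (Fin d) ℂ, Xᴴ = X → Yᴴ = Y → X*Y = 0 → Y*X = 0 := by
    intro X Y hX hY hXY
    have h := congrArg conjTranspose hXY
    rwa [conjTranspose_mul, hX, hY, conjTranspose_zero] at h
  have hB1A : PB₁ * PA = 0 := swap _ _ hPA.1 hPB₁.1 horth.1
  have hCA : PC * PA = 0 := swap _ _ hPA.1 hPC.1 horth.2.2.1
  have hCB1 : PC * PB₁ = 0 := swap _ _ hPB₁.1 hPC.1 horth.2.2.2.2.1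
  -- p, s, b facts
  have hpPA : (PA + PB₁) * PA = PA := by rw [Matrix.add_mul, hPA.2, hB1A, add_zero]
  have hPAp : PA * (PA + PB₁) = PA := by rw [Matrix.mul_add, hPA.2, horth.1, add_zero]
  have hpPC : (PA + PB₁) * PC = 0 := by rw [Matrix.add_mul, horth.2.2.1, horth.2.2.2.2.1, add_zero]
  have hPCp : PC * (PA + PB₁) = 0 := by rw [Matrix.mul_add, hCA, hCB1, add_zero]
  have hph : (PA + PB₁)ᴴ = PA + PB₁ := by rw [conjTranspose_add, hPA.1, hPB₁.1]
  have hpp : (PA + PB₁) * (PA + PB₁) = PA + PB₁ := by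
    rw [Matrix.mul_add, hpPA, Matrix.add_mul, horth.1, hPB₁.2, zero_add]
  have hsh : (PA + PC)ᴴ = PA + PC := by rw [conjTranspose_add, hPA.1, hPC.1]
  have hss : (PA + PC) * (PA + PC) = PA + PC := by
    rw [Matrix.mul_add, Matrix.add_mul, Matrix.add_mul, hPA.2, hPC.2, horth.2.2.1, hCA]
    abel
  -- kill facts
  have hq : (1 : Matrix (Fin d) (Fin d) ℂ) - (PA + PB₁) = PB₂ + PC := by rw [← hsum]; abel
  have kPA : ∀ i, (PA + PB₁) * (K i * PA) = K i * PA := by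
    intro i
    have h0 : ((1 : Matrix (Fin d) (Fin d) ℂ) - (PA + PB₁)) * (K i * PA) = 0 := by
      rw [hq, ← Matrix.mul_assoc]; exact (hcond i).1
    rw [Matrix.sub_mul, Matrix.one_mul, sub_eq_zero] at h0
    exact h0.symm
  have kPC : ∀ i, (PA + PB₁) * (K i * PC) = 0 := by
    intro i
    rw [← Matrix.mul_assoc]; exact (hcond i).2
  have rPA : ∀ i, PA * (K i)ᴴ * (PA + PB₁) = PA * (K i)ᴴ := by
    intro i
    have h := congrArg conjTranspose (kPA i)
    rwa [conjTranspose_mul, conjTranspose_mul, hPA.1, hph] at h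
  have rPC : ∀ i, PC * (K i)ᴴ * (PA + PB₁) = 0 := by
    intro i
    have h := congrArg conjTranspose (kPC i)
    rwa [conjTranspose_mul, conjTranspose_mul, hPC.1, hph, conjTranspose_zero] at h
  -- the key identity
  have hsb : (PA + PC) + (PB₁ + PB₂) = 1 := by rw [← hsum]; abel
  have hsexp : (PA + PC) * ρ * (PA + PC) = PA*ρ*PA + PA*ρ*PC + PC*ρ*PA + PC*ρ*PC := by
    noncomm_ring
  have key := QBT.key_identity K ρ PA PC (PA + PB₁) (PA + PC) (PB₁ + PB₂)
    hsb hsexp hpPA hPAp hpPC hPCp kPA kPC rPA rPC hsteady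
  -- rewrite the goal matrix
  set c : ℝ := ((PA * ρ).trace.re)⁻¹ with hc
  have hc0 : 0 ≤ c := inv_nonneg.mpr htrA.le
  have hgoalmat : (∑ i, K i * (c • (PA * ρ * PA)) * (K i)ᴴ) - c • (PA * ρ * PA)
      = c • ((∑ i, K i * (PA * ρ * PA) * (K i)ᴴ) - (PA * ρ * PA)) := by
    rw [smul_sub]
    congr 1
    rw [Finset.smul_sum]
    exact Finset.sum_congr rfl fun i _ => by rw [mul_smul_comm, smul_mul_assoc]
  rw [hgoalmat, key]
  -- contraction facts
  have hconp : QBT.IsCon (PA + PB₁) := QBT.isCon_of_proj hph hpp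
  have hcons : QBT.IsCon (PA + PC) := QBT.isCon_of_proj hsh hss
  -- the two generic bounds
  have hub1 : ∀ D : Matrix (Fin d) (Fin d) ℂ, QBT.IsCon D →
      ((D * ((PB₁ + PB₂) * ρ)).trace).re ≤ traceNorm ((PB₁ + PB₂) * ρ) := by
    intro D hD
    exact QBT.re_trace_mul_le_traceNorm _ hD.1
  have hPBh : (PB₁ + PB₂)ᴴ = PB₁ + PB₂ := by rw [conjTranspose_add, hPB₁.1, hPB₂.1]
  have hub2 : ∀ D : Matrix (Fin d) (Fin d) ℂ, QBT.IsCon D →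
      ((D * ((PA + PC) * ρ * (PB₁ + PB₂))).trace).re ≤ traceNorm ((PB₁ + PB₂) * ρ) := by
    intro D hD
    have e1 : ((D * ((PA + PC) * ρ * (PB₁ + PB₂))).trace).re
        = ((((PA + PC) * Dᴴ) * ((PB₁ + PB₂) * ρ)).trace).re := by
      calc ((D * ((PA + PC) * ρ * (PB₁ + PB₂))).trace).re
          = (((D * ((PA + PC) * ρ * (PB₁ + PB₂)))ᴴ).trace).re := by
            rw [Matrix.trace_conjTranspose, Complex.star_def, Complex.conj_re]
        _ = ((((PA + PC) * ρ * (PB₁ + PB₂))ᴴ * Dᴴ).trace).re := by rw [conjTranspose_mul]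
        _ = (((PB₁ + PB₂) * ρ * (PA + PC) * Dᴴ).trace).re := by
            rw [conjTranspose_mul, conjTranspose_mul, hPBh, hρh, hsh]
            simp only [Matrix.mul_assoc]
        _ = ((((PA + PC) * Dᴴ) * ((PB₁ + PB₂) * ρ)).trace).re := by
            rw [Matrix.trace_mul_cycle, Matrix.trace_mul_cycle]
    rw [e1]
    exact QBT.re_trace_mul_le_traceNorm _ ((hcons.mul hD.conjTranspose)).1
  -- bounds on the four terms
  set p : Matrix (Fin d) (Fin d) ℂ := PA + PB₁ with hpdef
  have cyc : ∀ B X : Matrix (Fin d) (Fin d) ℂ,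
      (B * (p * X * p)).trace = ((p * B * p) * X).trace := by
    intro B X
    calc (B * (p * X * p)).trace = (B * p * X * p).trace := by
          simp only [Matrix.mul_assoc]
      _ = (p * (B * p) * X).trace := by rw [Matrix.trace_mul_cycle]
      _ = ((p * B * p) * X).trace := by simp only [Matrix.mul_assoc]
  have hsumtr : ∀ (C : Matrix (Fin d) (Fin d) ℂ) (X : Matrix (Fin d) (Fin d) ℂ),
      (C * (∑ i, K i * X * (K i)ᴴ)).trace = ((∑ i, (K i)ᴴ * C * K i) * X).trace := by
    intro C X
    rw [Finset.mul_sum, Matrix.trace_sum, Finset.sum_mul, Matrix.trace_sum]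
    refine Finset.sum_congr rfl fun i _ => ?_
    calc (C * (K i * X * (K i)ᴴ)).trace = (C * K i * X * (K i)ᴴ).trace := by
          simp only [Matrix.mul_assoc]
      _ = ((K i)ᴴ * (C * K i) * X).trace := by rw [Matrix.trace_mul_cycle]
      _ = ((K i)ᴴ * C * K i * X).trace := by simp only [Matrix.mul_assoc]
  -- final numeric bound
  set tN := traceNorm ((PB₁ + PB₂) * ρ) with htN
  have hbound : ∀ B : Matrix (Fin d) (Fin d) ℂ, QBT.IsCon B →
      ((B * ((p*((PB₁+PB₂)*ρ)*p + p*((PA+PC)*ρ*(PB₁+PB₂))*p)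
        - (p*(∑ i, K i*((PB₁+PB₂)*ρ)*(K i)ᴴ)*p
          + p*(∑ i, K i*((PA+PC)*ρ*(PB₁+PB₂))*(K i)ᴴ)*p))).trace).re ≤ 4 * tN := by
    intro B hB
    have hpBp : QBT.IsCon (p * B * p) := (hconp.mul hB).mul hconp
    have hnpBp : QBT.IsCon ((-(p * B * p))) := hpBp.neg
    have b1 : ((B * (p*((PB₁+PB₂)*ρ)*p)).trace).re ≤ tN := by
      rw [cyc]; exact hub1 _ hpBp
    have b2 : ((B * (p*((PA+PC)*ρ*(PB₁+PB₂))*p)).trace).re ≤ tN := by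
      rw [cyc]; exact hub2 _ hpBp
    have b3 : (-((B * (p*(∑ i, K i*((PB₁+PB₂)*ρ)*(K i)ᴴ)*p)).trace).re) ≤ tN := by
      have e : -((B * (p*(∑ i, K i*((PB₁+PB₂)*ρ)*(K i)ᴴ)*p)).trace).re
          = (((∑ i, (K i)ᴴ * (-(p * B * p)) * K i) * ((PB₁+PB₂)*ρ)).trace).re := by
        rw [cyc, hsumtr]
        have : (∑ i, (K i)ᴴ * (-(p * B * p)) * K i) = -(∑ i, (K i)ᴴ * (p * B * p) * K i) := by
          rw [← Finset.sum_neg_distrib]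
          exact Finset.sum_congr rfl fun i _ => by rw [Matrix.mul_neg, Matrix.neg_mul]
        rw [this, Matrix.neg_mul, trace_neg, Complex.neg_re]
      rw [e]
      exact hub1 _ (QBT.isCon_channel hK hnpBp)
    have b4 : (-((B * (p*(∑ i, K i*((PA+PC)*ρ*(PB₁+PB₂))*(K i)ᴴ)*p)).trace).re) ≤ tN := by
      have e : -((B * (p*(∑ i, K i*((PA+PC)*ρ*(PB₁+PB₂))*(K i)ᴴ)*p)).trace).re
          = (((∑ i, (K i)ᴴ * (-(p * B * p)) * K i) * ((PA+PC)*ρ*(PB₁+PB₂))).trace).re := by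
        rw [cyc, hsumtr]
        have : (∑ i, (K i)ᴴ * (-(p * B * p)) * K i) = -(∑ i, (K i)ᴴ * (p * B * p) * K i) := by
          rw [← Finset.sum_neg_distrib]
          exact Finset.sum_congr rfl fun i _ => by rw [Matrix.mul_neg, Matrix.neg_mul]
        rw [this, Matrix.neg_mul, trace_neg, Complex.neg_re]
      rw [e]
      exact hub2 _ (QBT.isCon_channel hK hnpBp)
    have esplit : (B * ((p*((PB₁+PB₂)*ρ)*p + p*((PA+PC)*ρ*(PB₁+PB₂))*p)
        - (p*(∑ i, K i*((PB₁+PB₂)*ρ)*(K i)ᴴ)*p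
          + p*(∑ i, K i*((PA+PC)*ρ*(PB₁+PB₂))*(K i)ᴴ)*p)))
        = B * (p*((PB₁+PB₂)*ρ)*p) + B * (p*((PA+PC)*ρ*(PB₁+PB₂))*p)
          - B * (p*(∑ i, K i*((PB₁+PB₂)*ρ)*(K i)ᴴ)*p)
          - B * (p*(∑ i, K i*((PA+PC)*ρ*(PB₁+PB₂))*(K i)ᴴ)*p) := by
      noncomm_ring
    rw [esplit, trace_sub, trace_sub, trace_add, Complex.sub_re, Complex.sub_re, Complex.add_re]
    linarith [b1, b2, b3, b4]
  -- conclude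
  have htNn : 0 ≤ tN := QBT.traceNorm_nonneg _
  have hfin : traceNorm (c • ((p*((PB₁+PB₂)*ρ)*p + p*((PA+PC)*ρ*(PB₁+PB₂))*p)
      - (p*(∑ i, K i*((PB₁+PB₂)*ρ)*(K i)ᴴ)*p
        + p*(∑ i, K i*((PA+PC)*ρ*(PB₁+PB₂))*(K i)ᴴ)*p))) ≤ c * (4 * tN) := by
    obtain ⟨B, hB, hBeq⟩ := QBT.exists_isCon_attain (c • ((p*((PB₁+PB₂)*ρ)*p
      + p*((PA+PC)*ρ*(PB₁+PB₂))*p) - (p*(∑ i, K i*((PB₁+PB₂)*ρ)*(K i)ᴴ)*p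
        + p*(∑ i, K i*((PA+PC)*ρ*(PB₁+PB₂))*(K i)ᴴ)*p)))
    rw [← hBeq]
    have e : ((B * (c • ((p*((PB₁+PB₂)*ρ)*p + p*((PA+PC)*ρ*(PB₁+PB₂))*p)
        - (p*(∑ i, K i*((PB₁+PB₂)*ρ)*(K i)ᴴ)*p
          + p*(∑ i, K i*((PA+PC)*ρ*(PB₁+PB₂))*(K i)ᴴ)*p)))).trace).re
        = c * ((B * ((p*((PB₁+PB₂)*ρ)*p + p*((PA+PC)*ρ*(PB₁+PB₂))*p)
        - (p*(∑ i, K i*((PB₁+PB₂)*ρ)*(K i)ᴴ)*p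
          + p*(∑ i, K i*((PA+PC)*ρ*(PB₁+PB₂))*(K i)ᴴ)*p))).trace).re := by
      rw [mul_smul_comm, trace_smul]
      rw [Complex.real_smul, Complex.re_ofReal_mul]
    rw [e]
    exact mul_le_mul_of_nonneg_left (hbound B hB) hc0
  refine le_trans hfin ?_
  rw [div_eq_mul_inv]
  calc c * (4 * tN) = 4 * tN * c := by ring
    _ ≤ 10 * tN * c := by
        have : (0:ℝ) ≤ c := hc0
        nlinarith [htNn]
    _ = 10 * traceNorm ((PB₁ + PB₂) * ρ) * ((PA * ρ).trace.re)⁻¹ := by rw [htN, hc]
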